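/- Let q ∈ (0,1) and let μ be a Borel probability measure on ℝ supported in [1, C] for some C ≥ 1, and set ν := T_q μ. Then ∫ z² dν ≤ 2(1−q)·∫ x² dμ + (2−q)·(∫ x dμ)². -/

import Mathlib

open MeasureTheory ProbabilityTheory Filter

noncomputable def Sfun : ℝ × ℝ → ℝ := fun p => p.1 + p.2

noncomputable def Dfun : ℝ × ℝ × ℝ × ℝ → ℝ := fun p =>
  ((p.1 + p.2.1) * (p.2.2.1 + p.2.2.2)) / (p.1 + p.2.1 + p.2.2.1 + p.2.2.2)

/-- One-step resistance recursion map on Borel measures on ℝ. -/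
noncomputable def Tq (q : ℝ) (μ : Measure ℝ) : Measure ℝ :=
  ENNReal.ofReal (1 - q) • Measure.map Sfun (μ.prod μ) +
    ENNReal.ofReal q • Measure.map Dfun (μ.prod (μ.prod (μ.prod μ)))

/-- μₙ = T_qⁿ δ₁ : law of the two-terminal resistance after n replacement steps. -/
noncomputable def mu (q : ℝ) (n : ℕ) : Measure ℝ := (Tq q)^[n] (Measure.dirac 1)

lemma Sfun_meas : Measurable Sfun := by unfold Sfun; fun_prop

lemma Dfun_meas : Measurable Dfun := by unfold Dfun; fun_prop

lemma compl_prod_null {α β : Type*} [MeasurableSpace α] [MeasurableSpace β]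
    {ν : Measure α} {ρ : Measure β} [SigmaFinite ρ] {A : Set α} {B : Set β}
    (h1 : ν Aᶜ = 0) (h2 : ρ Bᶜ = 0) : (ν.prod ρ) ((A ×ˢ B)ᶜ) = 0 := by
  rw [Set.compl_prod_eq_union]
  refine measure_union_null ?_ ?_
  · rw [Measure.prod_prod, h1, zero_mul]
  · rw [Measure.prod_prod, h2, mul_zero]

lemma ae_mem_of_compl_null {α : Type*} [MeasurableSpace α] {ν : Measure α} {A : Set α}
    (h : ν Aᶜ = 0) : ∀ᵐ x ∂ν, x ∈ A := by
  rw [ae_iff]; exact h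

theorem stmt12 (q C : ℝ) (hq : q ∈ Set.Ioo (0 : ℝ) 1) (hC : 1 ≤ C)
    (μ : Measure ℝ) [IsProbabilityMeasure μ] (hsupp : μ (Set.Icc 1 C)ᶜ = 0) :
    ∫ z, z ^ 2 ∂(Tq q μ) ≤
      2 * (1 - q) * (∫ x, x ^ 2 ∂μ) + (2 - q) * (∫ x, x ∂μ) ^ 2 := by
  obtain ⟨hq0, hq1⟩ := hq
  set I := Set.Icc (1:ℝ) C with hI
  set m := ∫ x, x ∂μ with hm
  set M := ∫ x, x ^ 2 ∂μ with hM
  have haeμ : ∀ᵐ x ∂μ, x ∈ I := ae_mem_of_compl_null hsupp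
  have hπnull : (μ.prod μ) ((I ×ˢ I)ᶜ) = 0 := compl_prod_null hsupp hsupp
  have haeπ : ∀ᵐ p ∂(μ.prod μ), p ∈ I ×ˢ I := ae_mem_of_compl_null hπnull
  have haeππ : ∀ᵐ w ∂((μ.prod μ).prod (μ.prod μ)), w ∈ (I ×ˢ I) ×ˢ (I ×ˢ I) :=
    ae_mem_of_compl_null (compl_prod_null hπnull hπnull)
  -- integrability of coordinate functions
  have hint1 : Integrable (fun x : ℝ => x) μ := by
    refine (integrable_const C).mono' measurable_id.aestronglyMeasurable ?_
    filter_upwards [haeμ] with x hx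
    rw [Real.norm_eq_abs, abs_of_nonneg (le_trans zero_le_one hx.1)]
    exact hx.2
  have hintp1 : Integrable (fun p : ℝ × ℝ => p.1) (μ.prod μ) := by
    refine (integrable_const C).mono' measurable_fst.aestronglyMeasurable ?_
    filter_upwards [haeπ] with p hp
    rw [Real.norm_eq_abs, abs_of_nonneg (le_trans zero_le_one hp.1.1)]
    exact hp.1.2
  have hintp2 : Integrable (fun p : ℝ × ℝ => p.2) (μ.prod μ) := by
    refine (integrable_const C).mono' measurable_snd.aestronglyMeasurable ?_
    filter_upwards [haeπ] with p hp
    rw [Real.norm_eq_abs, abs_of_nonneg (le_trans zero_le_one hp.2.1)]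
    exact hp.2.2
  have hintp1sq : Integrable (fun p : ℝ × ℝ => p.1 ^ 2) (μ.prod μ) := by
    refine (integrable_const (C^2)).mono' (measurable_fst.pow_const 2).aestronglyMeasurable ?_
    filter_upwards [haeπ] with p hp
    rw [Real.norm_eq_abs, abs_of_nonneg (sq_nonneg _)]
    exact pow_le_pow_left₀ (le_trans zero_le_one hp.1.1) hp.1.2 2
  have hintp2sq : Integrable (fun p : ℝ × ℝ => p.2 ^ 2) (μ.prod μ) := by
    refine (integrable_const (C^2)).mono' (measurable_snd.pow_const 2).aestronglyMeasurable ?_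
    filter_upwards [haeπ] with p hp
    rw [Real.norm_eq_abs, abs_of_nonneg (sq_nonneg _)]
    exact pow_le_pow_left₀ (le_trans zero_le_one hp.2.1) hp.2.2 2
  have hintpmul : Integrable (fun p : ℝ × ℝ => p.1 * p.2) (μ.prod μ) := by
    refine (integrable_const (C*C)).mono' (measurable_fst.mul measurable_snd).aestronglyMeasurable ?_
    filter_upwards [haeπ] with p hp
    have h10 : (0:ℝ) ≤ p.1 := le_trans zero_le_one hp.1.1
    have h20 : (0:ℝ) ≤ p.2 := le_trans zero_le_one hp.2.1
    rw [Real.norm_eq_abs, abs_of_nonneg (mul_nonneg h10 h20)]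
    exact mul_le_mul hp.1.2 hp.2.2 h20 (le_trans zero_le_one hC)
  have hintS2 : Integrable (fun p => (Sfun p) ^ 2) (μ.prod μ) := by
    refine (integrable_const ((2*C)^2)).mono' (Sfun_meas.pow_const 2).aestronglyMeasurable ?_
    filter_upwards [haeπ] with p hp
    rw [Real.norm_eq_abs, abs_of_nonneg (sq_nonneg _)]
    have h1 : Sfun p ≤ 2*C := by
      have := hp.1.2; have := hp.2.2; unfold Sfun; linarith
    have h0 : (0:ℝ) ≤ Sfun p := by
      have := hp.1.1; have := hp.2.1; unfold Sfun; linarith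
    exact pow_le_pow_left₀ h0 h1 2
  -- the two moment computations over μ.prod μ
  have hS1 : ∫ p, Sfun p ∂(μ.prod μ) = 2 * m := by
    unfold Sfun
    rw [integral_add hintp1 hintp2, integral_fun_fst (f := fun x : ℝ => x),
      integral_fun_snd (f := fun x : ℝ => x)]
    simp [hm]; ring
  have hS2 : ∫ p, (Sfun p) ^ 2 ∂(μ.prod μ) = 2 * M + 2 * m ^ 2 := by
    have hexp : (fun p : ℝ × ℝ => (Sfun p) ^ 2)
        = fun p : ℝ × ℝ => (p.1 ^ 2 + p.2 ^ 2) + 2 * (p.1 * p.2) := by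
      funext p; unfold Sfun; ring
    have hadd : Integrable (fun p : ℝ × ℝ => p.1 ^ 2 + p.2 ^ 2) (μ.prod μ) :=
      hintp1sq.add hintp2sq
    have hmul2 : Integrable (fun p : ℝ × ℝ => 2 * (p.1 * p.2)) (μ.prod μ) :=
      hintpmul.const_mul 2
    rw [hexp, integral_add hadd hmul2,
      integral_add hintp1sq hintp2sq, integral_const_mul,
      integral_fun_fst (f := fun x : ℝ => x ^ 2), integral_fun_snd (f := fun x : ℝ => x ^ 2),
      integral_prod_mul (f := fun x : ℝ => x) (g := fun x : ℝ => x)]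
    simp [hm, hM]; ring
  -- the D-part
  have hassoc : μ.prod (μ.prod (μ.prod μ))
      = Measure.map MeasurableEquiv.prodAssoc ((μ.prod μ).prod (μ.prod μ)) :=
    (Measure.prodAssoc_prod).symm
  have hDmap : ∫ z, (Dfun z) ^ 2 ∂(μ.prod (μ.prod (μ.prod μ)))
      = ∫ w, (Dfun (MeasurableEquiv.prodAssoc w)) ^ 2 ∂((μ.prod μ).prod (μ.prod μ)) := by
    rw [hassoc, integral_map (MeasurableEquiv.prodAssoc.measurable.aemeasurable)
      (Dfun_meas.pow_const 2).aestronglyMeasurable]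
  have hDform : ∀ w : (ℝ × ℝ) × (ℝ × ℝ),
      Dfun (MeasurableEquiv.prodAssoc w) = (Sfun w.1 * Sfun w.2) / (Sfun w.1 + Sfun w.2) := by
    rintro ⟨⟨a, b⟩, ⟨c, d⟩⟩
    unfold Dfun Sfun MeasurableEquiv.prodAssoc
    simp [Equiv.prodAssoc]
    ring_nf
  have habS : ∀ w : (ℝ × ℝ) × (ℝ × ℝ), w ∈ (I ×ˢ I) ×ˢ (I ×ˢ I) →
      2 ≤ Sfun w.1 ∧ Sfun w.1 ≤ 2*C ∧ 2 ≤ Sfun w.2 ∧ Sfun w.2 ≤ 2*C := by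
    rintro ⟨⟨a, b⟩, ⟨c, d⟩⟩ hw
    obtain ⟨⟨ha, hb⟩, hc, hd⟩ := hw
    unfold Sfun; dsimp
    exact ⟨by linarith [ha.1, hb.1], by linarith [ha.2, hb.2],
      by linarith [hc.1, hd.1], by linarith [hc.2, hd.2]⟩
  have hintD : Integrable (fun w => (Dfun (MeasurableEquiv.prodAssoc w)) ^ 2)
      ((μ.prod μ).prod (μ.prod μ)) := by
    refine (integrable_const ((2*C)^2)).mono'
      ((Dfun_meas.comp MeasurableEquiv.prodAssoc.measurable).pow_const 2).aestronglyMeasurable ?_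
    filter_upwards [haeππ] with w hw
    obtain ⟨h2a, haC, h2b, hbC⟩ := habS w hw
    rw [hDform w, Real.norm_eq_abs, abs_of_nonneg (sq_nonneg _)]
    set a := Sfun w.1; set b := Sfun w.2
    have hs : (0:ℝ) < a + b := by linarith
    have hD : a * b / (a + b) ≤ 2*C := by
      rw [div_le_iff₀ hs]; nlinarith
    have hDnn : (0:ℝ) ≤ a * b / (a + b) := by positivity
    exact pow_le_pow_left₀ hDnn hD 2
  have hintG : Integrable (fun w : (ℝ × ℝ) × (ℝ × ℝ) => (Sfun w.1 / 2) * (Sfun w.2 / 2))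
      ((μ.prod μ).prod (μ.prod μ)) := by
    refine (integrable_const (C*C)).mono'
      (((Sfun_meas.comp measurable_fst).div_const 2).mul
        ((Sfun_meas.comp measurable_snd).div_const 2)).aestronglyMeasurable ?_
    filter_upwards [haeππ] with w hw
    obtain ⟨h2a, haC, h2b, hbC⟩ := habS w hw
    rw [Real.norm_eq_abs, abs_of_nonneg (by positivity)]
    nlinarith
  have hDle : ∫ z, (Dfun z) ^ 2 ∂(μ.prod (μ.prod (μ.prod μ))) ≤ m ^ 2 := by
    rw [hDmap]
    have hle : ∫ w, (Dfun (MeasurableEquiv.prodAssoc w)) ^ 2 ∂((μ.prod μ).prod (μ.prod μ))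
        ≤ ∫ w, (Sfun w.1 / 2) * (Sfun w.2 / 2) ∂((μ.prod μ).prod (μ.prod μ)) := by
      refine integral_mono_ae hintD hintG ?_
      filter_upwards [haeππ] with w hw
      obtain ⟨h2a, haC, h2b, hbC⟩ := habS w hw
      rw [hDform w]
      set a := Sfun w.1; set b := Sfun w.2
      have hs : (0:ℝ) < a + b := by linarith
      rw [div_pow, div_le_iff₀ (by positivity)]
      nlinarith [sq_nonneg (a - b), mul_pos (show (0:ℝ) < a by linarith) (show (0:ℝ) < b by linarith)]
    refine le_trans hle ?_
    rw [integral_prod_mul (f := fun p => Sfun p / 2) (g := fun p => Sfun p / 2)]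
    rw [integral_div, hS1]
    rw [show (2 : ℝ) * m / 2 = m by ring]
    exact le_of_eq (sq m).symm
  -- assemble
  have hq0' : (0:ℝ) ≤ 1 - q := by linarith
  have hmz : Measurable fun z : ℝ => z ^ 2 := by fun_prop
  have hmzS : AEStronglyMeasurable (fun z : ℝ => z ^ 2) (Measure.map Sfun (μ.prod μ)) :=
    hmz.aestronglyMeasurable
  have hmzD : AEStronglyMeasurable (fun z : ℝ => z ^ 2)
      (Measure.map Dfun (μ.prod (μ.prod (μ.prod μ)))) :=
    hmz.aestronglyMeasurable
  have hintS2' : Integrable (fun z : ℝ => z ^ 2) (Measure.map Sfun (μ.prod μ)) := by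
    rw [integrable_map_measure hmzS Sfun_meas.aemeasurable]
    exact hintS2
  have hintD' : Integrable (fun z : ℝ => z ^ 2)
      (Measure.map Dfun (μ.prod (μ.prod (μ.prod μ)))) := by
    rw [integrable_map_measure hmzD Dfun_meas.aemeasurable]
    simp only [Function.comp_def]
    rw [hassoc, integrable_map_measure
      ((Dfun_meas.pow_const 2).aestronglyMeasurable)
      MeasurableEquiv.prodAssoc.measurable.aemeasurable]
    exact hintD
  have hTq : ∫ z, z ^ 2 ∂(Tq q μ)
      = (1 - q) * ∫ p, (Sfun p) ^ 2 ∂(μ.prod μ)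
        + q * ∫ z, (Dfun z) ^ 2 ∂(μ.prod (μ.prod (μ.prod μ))) := by
    unfold Tq
    rw [integral_add_measure (hintS2'.smul_measure ENNReal.ofReal_ne_top)
      (hintD'.smul_measure ENNReal.ofReal_ne_top),
      integral_smul_measure, integral_smul_measure,
      ENNReal.toReal_ofReal hq0', ENNReal.toReal_ofReal (le_of_lt hq0),
      integral_map Sfun_meas.aemeasurable hmzS,
      integral_map Dfun_meas.aemeasurable hmzD]
    simp [smul_eq_mul]
  rw [hTq, hS2]
  nlinarith [hDle, mul_le_mul_of_nonneg_left hDle (le_of_lt hq0)]
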